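/- Let B be a K-acceptor and L = L(B). For all timed words u, v: if B reaches the same control state on reading u and v from the initial configuration (u ≈^B v), then u ≈^{L,K} v. -/

import Mathlib

open scoped NNReal Classical

namespace IRTA

/-- A timestamp is a finite sequence of non-negative reals. -/
abbrev Timestamp : Type := List ℝ≥0

/-- A timed word is a finite sequence of (delay, letter) pairs. -/
abbrev TimedWord (A : Type) : Type := List (ℝ≥0 × A)

/-- Fractional part of a non-negative real. -/
noncomputable def fracPart (x : ℝ≥0) : ℝ≥0 := x - (⌊x⌋₊ : ℝ≥0)

/-- `x` is a natural-number value. -/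
def IsNatVal (x : ℝ≥0) : Prop := ∃ m : ℕ, x = (m : ℝ≥0)

/-- Region equivalence `≡^K`. -/
def RegEq (K : ℕ) (x y : ℝ≥0) : Prop :=
  (⌊x⌋₊ = ⌊y⌋₊ ∧ (fracPart x = 0 ↔ fracPart y = 0)) ∨ ((K : ℝ≥0) < x ∧ (K : ℝ≥0) < y)

/-- One step of the (greedy) clock evolution: reset whenever the value is an
integer between `0` and `K`. -/
noncomputable def resetStep (K : ℕ) (v : ℝ≥0) : ℝ≥0 :=
  if ∃ m : ℕ, m ≤ K ∧ v = (m : ℝ≥0) then 0 else v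

/-- Auxiliary function computing `c^K` with accumulator `v`. -/
noncomputable def cKAux (K : ℕ) : ℝ≥0 → Timestamp → ℝ≥0
  | v, [] => v
  | v, t :: d => cKAux K (resetStep K (v + t)) d

/-- `c^K(d)`: the sum of the delays after the last integral position of `d`. -/
noncomputable def cK (K : ℕ) (d : Timestamp) : ℝ≥0 := cKAux K 0 d

/-- `c^K` of a timed word is `c^K` of its timestamp. -/
noncomputable def cKW {A : Type} (K : ℕ) (w : TimedWord A) : ℝ≥0 :=
  cK K (w.map Prod.fst)

/-- `c^K_⊤` : `c^K` truncated at `K`. -/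
noncomputable def cKTop {A : Type} (K : ℕ) (w : TimedWord A) : WithTop ℝ≥0 :=
  if cKW K w ≤ (K : ℝ≥0) then ((cKW K w : ℝ≥0) : WithTop ℝ≥0) else ⊤

/-! ### Clock constraints and one-clock timed automata -/

/-- Clock constraints `φ ::= x < m | m < x | x = m | φ ∧ φ`. -/
inductive CC : Type where
  | lt : ℕ → CC
  | gt : ℕ → CC
  | eq : ℕ → CC
  | and : CC → CC → CC

/-- Satisfaction of a clock constraint by a clock value. -/
def CC.sat : CC → ℝ≥0 → Prop
  | .lt m, x => x < (m : ℝ≥0)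
  | .gt m, x => (m : ℝ≥0) < x
  | .eq m, x => x = (m : ℝ≥0)
  | .and φ ψ, x => φ.sat x ∧ ψ.sat x

/-- The largest constant appearing in a clock constraint. -/
def CC.maxConst : CC → ℕ
  | .lt m => m
  | .gt m => m
  | .eq m => m
  | .and φ ψ => max φ.maxConst ψ.maxConst

/-- A transition of a one-clock timed automaton; `reset = true` means the
clock is reset (the `r = 0` case). -/
structure TTrans (Q A : Type) where
  src : Q
  dst : Q
  lab : A
  guard : CC
  reset : Bool

/-- A one-clock timed automaton. -/
structure TA (A : Type) where
  Q : Type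
  init : Q
  final : Set Q
  trans : Set (TTrans Q A)

/-- The automaton has finitely many states and transitions. -/
def TA.IsFinite {A : Type} (M : TA A) : Prop := Finite M.Q ∧ M.trans.Finite

/-- Runs of a one-clock timed automaton between configurations. -/
inductive Steps {A : Type} (M : TA A) : M.Q × ℝ≥0 → TimedWord A → M.Q × ℝ≥0 → Prop
  | nil (c : M.Q × ℝ≥0) : Steps M c [] c
  | cons {q : M.Q} {ν t : ℝ≥0} {a : A} {w : TimedWord A} {c : M.Q × ℝ≥0}
      (θ : TTrans M.Q A) (hθ : θ ∈ M.trans) (hsrc : θ.src = q) (hlab : θ.lab = a)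
      (hg : θ.guard.sat (ν + t))
      (hrest : Steps M (θ.dst, if θ.reset then 0 else ν + t) w c) :
      Steps M (q, ν) ((t, a) :: w) c

/-- The language of `M` from a given configuration. -/
def TA.LangFrom {A : Type} (M : TA A) (c : M.Q × ℝ≥0) : Set (TimedWord A) :=
  {w | ∃ q' : M.Q, ∃ ν' : ℝ≥0, Steps M c w (q', ν') ∧ q' ∈ M.final}

/-- The language of `M` (from the initial configuration). -/
def TA.Lang {A : Type} (M : TA A) : Set (TimedWord A) := M.LangFrom (M.init, 0)

/-- Determinism: distinct transitions with the same source and letter have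
disjoint guards. -/
def TA.Deterministic {A : Type} (M : TA A) : Prop :=
  ∀ θ₁ ∈ M.trans, ∀ θ₂ ∈ M.trans, θ₁ ≠ θ₂ → θ₁.src = θ₂.src → θ₁.lab = θ₂.lab →
    ∀ x : ℝ≥0, ¬ (θ₁.guard.sat x ∧ θ₂.guard.sat x)

/-- Completeness: every timed word admits a run from the initial configuration. -/
def TA.Complete {A : Type} (M : TA A) : Prop :=
  ∀ w : TimedWord A, ∃ c : M.Q × ℝ≥0, Steps M (M.init, 0) w c

/-- A 1-IRTA: every resetting transition has an equality guard. -/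
def TA.IsIRTA {A : Type} (M : TA A) : Prop :=
  ∀ θ ∈ M.trans, θ.reset = true → ∃ m : ℕ, θ.guard = CC.eq m

/-- Guards allowed in a strict 1-IRTA with constant `K`. -/
def StrictGuard (K : ℕ) (φ : CC) : Prop :=
  (∃ m : ℕ, φ = CC.eq m) ∨ (∃ m : ℕ, φ = CC.and (CC.gt m) (CC.lt (m + 1))) ∨ φ = CC.gt K

/-- Strictness with constant `K`: every guard is of one of the allowed forms
and a guard is an equality iff the transition resets. -/
def TA.IsStrict {A : Type} (M : TA A) (K : ℕ) : Prop :=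
  ∀ θ ∈ M.trans, StrictGuard K θ.guard ∧ ((∃ m : ℕ, θ.guard = CC.eq m) ↔ θ.reset = true)

/-- All constants appearing in guards are at most `K`. -/
def TA.MaxConstLE {A : Type} (M : TA A) (K : ℕ) : Prop :=
  ∀ θ ∈ M.trans, θ.guard.maxConst ≤ K

/-- `M` reaches the same control state on reading `u` and `v` from the initial
configuration. -/
def TA.SameState {A : Type} (M : TA A) (u v : TimedWord A) : Prop :=
  ∃ q : M.Q, ∃ ν ν' : ℝ≥0, Steps M (M.init, 0) u (q, ν) ∧ Steps M (M.init, 0) v (q, ν')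

/-- A `K`-acceptor. -/
def IsKAcceptor {A : Type} (M : TA A) (K : ℕ) : Prop :=
  M.IsFinite ∧ M.Complete ∧ M.Deterministic ∧ M.IsIRTA ∧ M.IsStrict K ∧ M.MaxConstLE K ∧
    ∀ u v : TimedWord A, M.SameState u v → RegEq K (cKW K u) (cKW K v)

/-! ### Equivalences on timed words -/

/-- `L`-preservation of a relation on timed words. -/
def LPreserving {A : Type} (L : Set (TimedWord A)) (r : TimedWord A → TimedWord A → Prop) :
    Prop :=
  ∀ u v : TimedWord A, r u v → (u ∈ L ↔ v ∈ L)

/-- `K`-monotonicity of a relation on timed words. -/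
def KMonotonic {A : Type} (K : ℕ) (r : TimedWord A → TimedWord A → Prop) : Prop :=
  ∀ u v : TimedWord A, r u v →
    RegEq K (cKW K u) (cKW K v) ∧
      ∀ (a : A) (t t' : ℝ≥0), RegEq K (cKW K u + t) (cKW K v + t') →
        r (u ++ [(t, a)]) (v ++ [(t', a)])

/-- Finite index: there are finitely many classes `{v | r u v}`. -/
def FiniteIndex {A : Type} (r : TimedWord A → TimedWord A → Prop) : Prop :=
  Set.Finite (Set.range fun u : TimedWord A => {v : TimedWord A | r u v})

/-! ### The rescaling maps -/

/-- The bijection `f_{λ→λ'}` of the open unit interval. -/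
noncomputable def fScale (lam lam' t : ℝ≥0) : ℝ≥0 :=
  if t ≤ lam then (lam' / lam) * t else lam' + ((1 - lam') / (1 - lam)) * (t - lam)

/-- The new delay `t'` computed from the current clock values `y, y'` and delay `t`. -/
noncomputable def tauStep (K : ℕ) (y y' t : ℝ≥0) : ℝ≥0 :=
  if (IsNatVal y ∧ IsNatVal y') ∨ ((K : ℝ≥0) < y ∧ (K : ℝ≥0) < y') then t
  else (⌊t⌋₊ : ℝ≥0) + fScale (1 - fracPart y) (1 - fracPart y') (fracPart t)

/-- Auxiliary rescaling map on timestamps, carrying the current clock values. -/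
noncomputable def tauAux (K : ℕ) : ℝ≥0 → ℝ≥0 → Timestamp → Timestamp
  | _, _, [] => []
  | y, y', t :: d =>
      tauStep K y y' t ::
        tauAux K (resetStep K (y + t)) (resetStep K (y' + tauStep K y y' t)) d

/-- The rescaling map `τ_{x→x'}` on timestamps. -/
noncomputable def tau (K : ℕ) (x x' : ℝ≥0) (d : Timestamp) : Timestamp :=
  tauAux K (resetStep K x) (resetStep K x') d

/-- Auxiliary rescaling map on timed words. -/
noncomputable def tauWAux {A : Type} (K : ℕ) : ℝ≥0 → ℝ≥0 → TimedWord A → TimedWord A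
  | _, _, [] => []
  | y, y', (t, a) :: w =>
      (tauStep K y y' t, a) ::
        tauWAux K (resetStep K (y + t)) (resetStep K (y' + tauStep K y y' t)) w

/-- The rescaling map `τ_{x→x'}` on timed words. -/
noncomputable def tauW {A : Type} (K : ℕ) (x x' : ℝ≥0) (w : TimedWord A) : TimedWord A :=
  tauWAux K (resetStep K x) (resetStep K x') w

/-! ### Residuals and the syntactic equivalence -/

/-- The residual language `u^{-1}L`. -/
def residual {A : Type} (L : Set (TimedWord A)) (u : TimedWord A) : Set (TimedWord A) :=
  {w : TimedWord A | u ++ w ∈ L}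

/-- The syntactic equivalence `≈^{L,K}`. -/
def ApproxLK {A : Type} (L : Set (TimedWord A)) (K : ℕ) (u v : TimedWord A) : Prop :=
  RegEq K (cKW K u) (cKW K v) ∧
    (tauW K (cKW K u) (cKW K v)) '' (residual L u) = residual L v

/-! ### The automaton built from a monotonic equivalence -/

/-- The region guard `φ([t])`. -/
noncomputable def phiOf (K : ℕ) (t : ℝ≥0) : CC :=
  if t ≤ (K : ℝ≥0) then
    (if IsNatVal t then CC.eq ⌊t⌋₊ else CC.and (CC.gt ⌊t⌋₊) (CC.lt (⌊t⌋₊ + 1)))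
  else CC.gt K

/-- The automaton `A_≈` built from an equivalence `s` on timed words. -/
noncomputable def Aapprox {A : Type} (L : Set (TimedWord A)) (K : ℕ)
    (s : Setoid (TimedWord A)) : TA A where
  Q := Quotient s
  init := Quotient.mk s ([] : TimedWord A)
  final := {q : Quotient s | ∃ u : TimedWord A, q = Quotient.mk s u ∧ u ∈ L}
  trans := {θ : TTrans (Quotient s) A |
    ∃ (u : TimedWord A) (a : A) (t : ℝ≥0),
      θ.src = Quotient.mk s u ∧ θ.dst = Quotient.mk s (u ++ [(t, a)]) ∧ θ.lab = a ∧
      θ.guard = phiOf K (cKW K u + t) ∧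
      (θ.reset = true ↔ ∃ m : ℕ, m ≤ K ∧ cKW K u + t = (m : ℝ≥0))}

/-! ### Half-integral and small words -/

/-- Every delay has fractional part `0` or `1/2`. -/
def HalfIntegral {A : Type} (w : TimedWord A) : Prop :=
  ∀ p ∈ w, fracPart p.1 = 0 ∨ fracPart p.1 = 1 / 2

/-- Every delay is `< K + 1`. -/
def SmallWord {A : Type} (K : ℕ) (w : TimedWord A) : Prop :=
  ∀ p ∈ w, p.1 < (K : ℝ≥0) + 1

/-- The delays of `Σ_K`: half-integral values `≤ K + 1/2`. -/
def IsSigmaK (K : ℕ) (t : ℝ≥0) : Prop :=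
  (fracPart t = 0 ∨ fracPart t = 1 / 2) ∧ t ≤ (K : ℝ≥0) + 1 / 2

/-- Words over `Σ_K` (small half-integral words). -/
def SigmaWord {A : Type} (K : ℕ) (w : TimedWord A) : Prop :=
  ∀ p ∈ w, IsSigmaK K p.1



/-! ### `K`-acceptors with their region representatives -/

/-- A `K`-acceptor bundled with the half-integral representative of the
unique region of each state. -/
structure KAcc (A : Type) (K : ℕ) where
  M : TA A
  acc : IsKAcceptor M K
  reg : M.Q → ℝ≥0
  regHalf : ∀ q : M.Q, fracPart (reg q) = 0 ∨ fracPart (reg q) = 1 / 2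
  regLe : ∀ q : M.Q, reg q ≤ (K : ℝ≥0) + 1 / 2
  regSpec : ∀ (w : TimedWord A) (q : M.Q) (x : ℝ≥0),
    Steps M (M.init, 0) w (q, x) → RegEq K x (reg q)

/-- The minimization equivalences `∼^i` on the states of a `K`-acceptor. -/
def simEq {A : Type} {K : ℕ} (B : KAcc A K) : ℕ → B.M.Q → B.M.Q → Prop
  | 0, p, q => B.reg p = B.reg q ∧ (p ∈ B.M.final ↔ q ∈ B.M.final)
  | i + 1, p, q => simEq B i p q ∧
      ∀ (t : ℝ≥0) (a : A), IsSigmaK K t →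
        ∀ θ₁ θ₂ : TTrans B.M.Q A, θ₁ ∈ B.M.trans → θ₂ ∈ B.M.trans →
          θ₁.src = p → θ₂.src = q → θ₁.lab = a → θ₂.lab = a →
          θ₁.guard = phiOf K t → θ₂.guard = phiOf K t →
          simEq B i θ₁.dst θ₂.dst

/-- The quotient automaton `B/∼^m`. -/
noncomputable def quotTA {A : Type} {K : ℕ} (B : KAcc A K) (m : ℕ) : TA A where
  Q := Quot (simEq B m)
  init := Quot.mk (simEq B m) B.M.init
  final := {c : Quot (simEq B m) | ∃ q ∈ B.M.final, c = Quot.mk (simEq B m) q}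
  trans := {θ : TTrans (Quot (simEq B m)) A |
    ∃ θ₀ ∈ B.M.trans,
      θ.src = Quot.mk (simEq B m) θ₀.src ∧ θ.dst = Quot.mk (simEq B m) θ₀.dst ∧
      θ.lab = θ₀.lab ∧ θ.guard = θ₀.guard ∧ θ.reset = θ₀.reset}

/-! ### Observation tables -/

/-- An observation table over `Σ_K`. -/
structure ObsTable (A : Type) (K : ℕ) where
  U1 : Set (TimedWord A)
  E : Set (TimedWord A)
  val : TimedWord A → TimedWord A → Bool
  U1fin : U1.Finite
  Efin : E.Finite
  U1sigma : ∀ u ∈ U1, SigmaWord K u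
  Esigma : ∀ e ∈ E, SigmaWord K e
  epsU1 : ([] : TimedWord A) ∈ U1
  prefixClosed : ∀ (u : TimedWord A) (x : ℝ≥0 × A), u ++ [x] ∈ U1 → u ∈ U1
  epsE : ([] : TimedWord A) ∈ E
  suffixClosed : ∀ (x : ℝ≥0 × A) (e : TimedWord A), x :: e ∈ E → e ∈ E

/-- The set `U2` of one-letter `Σ_K`-extensions of `U1`. -/
def obsU2 {A : Type} {K : ℕ} (T : ObsTable A K) : Set (TimedWord A) :=
  {w : TimedWord A | ∃ u ∈ T.U1, ∃ (t : ℝ≥0) (a : A), IsSigmaK K t ∧ w = u ++ [(t, a)]}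

/-- `R(u)`: the row of `u` (restricted to `E`) together with `c^K_⊤(u)`. -/
noncomputable def Rof {A : Type} {K : ℕ} (T : ObsTable A K) (u : TimedWord A) :
    ({e : TimedWord A // e ∈ T.E} → Bool) × WithTop ℝ≥0 :=
  (fun e => T.val u e.1, cKTop K u)

/-- The table is closed. -/
def ObsTable.Closed {A : Type} {K : ℕ} (T : ObsTable A K) : Prop :=
  ∀ w ∈ obsU2 T, ∃ u ∈ T.U1, Rof T w = Rof T u

/-- The table is consistent. -/
def ObsTable.Consistent {A : Type} {K : ℕ} (T : ObsTable A K) : Prop :=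
  ∀ u ∈ T.U1, ∀ w ∈ T.U1, Rof T u = Rof T w →
    ∀ (t : ℝ≥0) (a : A), IsSigmaK K t → Rof T (u ++ [(t, a)]) = Rof T (w ++ [(t, a)])

/-- The automaton `A_𝒯` induced by a (closed and consistent) observation table. -/
noncomputable def ATable {A : Type} {K : ℕ} (T : ObsTable A K) : TA A where
  Q := {f : ({e : TimedWord A // e ∈ T.E} → Bool) × WithTop ℝ≥0 // ∃ u ∈ T.U1, f = Rof T u}
  init := ⟨Rof T [], ⟨[], T.epsU1, rfl⟩⟩
  final := {q | ∃ u ∈ T.U1, q.1 = Rof T u ∧ T.val u [] = true}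
  trans := {θ | ∃ u ∈ T.U1, ∃ (t : ℝ≥0) (a : A), IsSigmaK K t ∧
      θ.src.1 = Rof T u ∧ θ.dst.1 = Rof T (u ++ [(t, a)]) ∧ θ.lab = a ∧
      θ.guard = phiOf K (cKW K u + t) ∧
      (θ.reset = true ↔ ∃ m : ℕ, m ≤ K ∧ cKW K u + t = (m : ℝ≥0))}

/-- A `K`-acceptor is consistent with the observation table `𝒯`. -/
def ConsistentWith {A : Type} {K : ℕ} (M : TA A) (T : ObsTable A K) : Prop :=
  ∀ w : TimedWord A, (w ∈ T.U1 ∨ w ∈ obsU2 T) → ∀ e ∈ T.E,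
    ∀ (q : M.Q) (ν : ℝ≥0), Steps M (M.init, 0) (w ++ e) (q, ν) →
      (q ∈ M.final ↔ T.val w e = true)

/-- Isomorphism of one-clock timed automata. -/
structure TAIso {A : Type} (M N : TA A) where
  toEquiv : M.Q ≃ N.Q
  init_eq : toEquiv M.init = N.init
  final_iff : ∀ q : M.Q, q ∈ M.final ↔ toEquiv q ∈ N.final
  trans_iff : ∀ θ : TTrans M.Q A,
    θ ∈ M.trans ↔
      (⟨toEquiv θ.src, toEquiv θ.dst, θ.lab, θ.guard, θ.reset⟩ : TTrans N.Q A) ∈ N.trans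


/-! ### Auxiliary lemmas for Statement 11 -/

section Aux

variable {K : ℕ}

lemma floor_le_self' (x : ℝ≥0) : (⌊x⌋₊ : ℝ≥0) ≤ x := Nat.floor_le (zero_le : (0:ℝ≥0) ≤ x)

lemma floor_add_fracPart (x : ℝ≥0) : (⌊x⌋₊ : ℝ≥0) + fracPart x = x :=
  add_tsub_cancel_of_le (floor_le_self' x)

lemma decompX (x : ℝ≥0) : x = (⌊x⌋₊ : ℝ≥0) + fracPart x := (floor_add_fracPart x).symm

lemma fracPart_lt_one (x : ℝ≥0) : fracPart x < 1 := by
  unfold fracPart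
  rw [tsub_lt_iff_left (floor_le_self' x)]
  exact_mod_cast Nat.lt_floor_add_one x

lemma floor_add_eq {n : ℕ} {h : ℝ≥0} (hh : h < 1) : ⌊(n : ℝ≥0) + h⌋₊ = n := by
  rw [Nat.floor_eq_iff (zero_le : (0:ℝ≥0) ≤ (n : ℝ≥0) + h)]
  exact ⟨le_self_add, by exact (add_lt_add_iff_left _).2 hh⟩

lemma fracPart_add_eq {n : ℕ} {h : ℝ≥0} (hh : h < 1) : fracPart ((n : ℝ≥0) + h) = h := by
  unfold fracPart
  rw [floor_add_eq hh, add_tsub_cancel_left]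

lemma fracPart_natCast (n : ℕ) : fracPart (n : ℝ≥0) = 0 := by
  have := fracPart_add_eq (n := n) (h := 0) one_pos
  simpa using this

lemma isNatVal_iff_fracPart {x : ℝ≥0} : IsNatVal x ↔ fracPart x = 0 := by
  constructor
  · rintro ⟨m, rfl⟩; exact fracPart_natCast m
  · intro h
    refine ⟨⌊x⌋₊, ?_⟩
    have := floor_add_fracPart x
    rw [h, add_zero] at this
    exact this.symm

lemma eq_natCast_iff (a : ℝ≥0) (m : ℕ) :
    a = (m : ℝ≥0) ↔ (⌊a⌋₊ = m ∧ fracPart a = 0) := by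
  constructor
  · rintro rfl; exact ⟨Nat.floor_natCast m, fracPart_natCast m⟩
  · rintro ⟨h1, h2⟩
    have := floor_add_fracPart a
    rw [h1, h2, add_zero] at this
    exact this.symm

lemma natCast_lt_iff (a : ℝ≥0) (m : ℕ) :
    (m : ℝ≥0) < a ↔ (m < ⌊a⌋₊ ∨ (m = ⌊a⌋₊ ∧ fracPart a ≠ 0)) := by
  constructor
  · intro hlt
    have hle : m ≤ ⌊a⌋₊ := Nat.le_floor hlt.le
    rcases eq_or_lt_of_le hle with heq | h'
    · refine Or.inr ⟨heq, fun h0 => ?_⟩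
      have ha : a = (m : ℝ≥0) := (eq_natCast_iff a m).2 ⟨heq.symm, h0⟩
      rw [ha] at hlt; exact lt_irrefl _ hlt
    · exact Or.inl h'
  · rintro (h' | ⟨heq, h0⟩)
    · exact lt_of_lt_of_le (by exact_mod_cast h') (floor_le_self' a)
    · calc (m : ℝ≥0) = (⌊a⌋₊ : ℝ≥0) := by rw [heq]
        _ < (⌊a⌋₊ : ℝ≥0) + fracPart a := lt_add_of_pos_right _ (pos_iff_ne_zero.2 h0)
        _ = a := floor_add_fracPart a

lemma lt_natCast_iff (a : ℝ≥0) (m : ℕ) : a < (m : ℝ≥0) ↔ ⌊a⌋₊ < m :=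
  (Nat.floor_lt (zero_le : (0:ℝ≥0) ≤ a)).symm

lemma regEq_refl (x : ℝ≥0) : RegEq K x x := Or.inl ⟨rfl, Iff.rfl⟩

lemma regEq_symm {a b : ℝ≥0} (h : RegEq K a b) : RegEq K b a := by
  rcases h with ⟨h1, h2⟩ | ⟨h1, h2⟩
  · exact Or.inl ⟨h1.symm, h2.symm⟩
  · exact Or.inr ⟨h2, h1⟩

lemma regEq_of_parts {N : ℕ} {h h' : ℝ≥0}
    (hh1 : h < 1) (hh1' : h' < 1) (h0 : h = 0 ↔ h' = 0) :
    RegEq K ((N : ℝ≥0) + h) ((N : ℝ≥0) + h') :=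
  Or.inl ⟨by rw [floor_add_eq hh1, floor_add_eq hh1'],
    by rw [fracPart_add_eq hh1, fracPart_add_eq hh1']; exact h0⟩

/-! #### `fScale` lemmas -/

lemma fScale_of_le {lam lam' g : ℝ≥0} (hle : g ≤ lam) :
    fScale lam lam' g = lam' / lam * g := if_pos hle

lemma fScale_of_gt {lam lam' g : ℝ≥0} (hgt : lam < g) :
    fScale lam lam' g = lam' + (1 - lam') / (1 - lam) * (g - lam) := if_neg (not_le.2 hgt)

lemma fScale_lt_lam {lam lam' g : ℝ≥0} (hl : 0 < lam) (hl' : 0 < lam')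
    (hg : g < lam) : fScale lam lam' g < lam' := by
  rw [fScale_of_le hg.le]
  calc lam' / lam * g < lam' / lam * lam :=
        mul_lt_mul_of_pos_left hg (div_pos hl' hl)
    _ = lam' := div_mul_cancel₀ lam' hl.ne'

lemma fScale_eq_lam {lam lam' : ℝ≥0} (hl : 0 < lam) :
    fScale lam lam' lam = lam' := by
  rw [fScale_of_le le_rfl, div_mul_cancel₀ lam' hl.ne']

lemma fScale_gt_lam {lam lam' g : ℝ≥0} (hl1 : lam < 1) (hl' : lam' < 1)
    (hg : lam < g) : lam' < fScale lam lam' g := by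
  rw [fScale_of_gt hg]
  refine lt_add_of_pos_right _ (mul_pos (div_pos ?_ ?_) ?_)
  · exact tsub_pos_of_lt hl'
  · exact tsub_pos_of_lt hl1
  · exact tsub_pos_of_lt hg

lemma fScale_lt_one {lam lam' g : ℝ≥0} (hl : 0 < lam) (hl1 : lam < 1)
    (hl' : lam' < 1) (hg : g < 1) : fScale lam lam' g < 1 := by
  by_cases hle : g ≤ lam
  · rw [fScale_of_le hle]
    calc lam' / lam * g ≤ lam' / lam * lam := mul_le_mul_right hle _
      _ = lam' := div_mul_cancel₀ lam' hl.ne'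
      _ < 1 := hl'
  · push_neg at hle
    rw [fScale_of_gt hle]
    have hc : (0:ℝ≥0) < (1 - lam') / (1 - lam) :=
      div_pos (tsub_pos_of_lt hl') (tsub_pos_of_lt hl1)
    calc lam' + (1 - lam') / (1 - lam) * (g - lam)
        < lam' + (1 - lam') / (1 - lam) * (1 - lam) := by
          refine (add_lt_add_iff_left _).2 (mul_lt_mul_of_pos_left ?_ hc)
          exact tsub_lt_tsub_right_of_le hle.le hg
      _ = lam' + (1 - lam') := by
          rw [div_mul_cancel₀ _ (tsub_pos_of_lt hl1).ne']
      _ = 1 := add_tsub_cancel_of_le hl'.le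

lemma fScale_eq_zero_iff {lam lam' g : ℝ≥0} (hl : 0 < lam) (hl' : 0 < lam') :
    fScale lam lam' g = 0 ↔ g = 0 := by
  constructor
  · intro h
    by_cases hle : g ≤ lam
    · rw [fScale_of_le hle] at h
      rcases mul_eq_zero.1 h with h' | h'
      · exact absurd h' (div_pos hl' hl).ne'
      · exact h'
    · push_neg at hle
      rw [fScale_of_gt hle] at h
      have hpos : (0:ℝ≥0) < lam' + (1 - lam') / (1 - lam) * (g - lam) :=
        lt_of_lt_of_le hl' le_self_add
      exact absurd h hpos.ne'
  · rintro rfl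
    rw [fScale_of_le (zero_le : (0:ℝ≥0) ≤ lam), mul_zero]

lemma fScale_inv {lam lam' g : ℝ≥0} (hl : 0 < lam) (hl1 : lam < 1)
    (hl' : 0 < lam') (hl1' : lam' < 1) :
    fScale lam' lam (fScale lam lam' g) = g := by
  by_cases hle : g ≤ lam
  · have h1 : fScale lam lam' g ≤ lam' := by
      rw [fScale_of_le hle]
      calc lam' / lam * g ≤ lam' / lam * lam := mul_le_mul_right hle _
        _ = lam' := div_mul_cancel₀ lam' hl.ne'
    rw [fScale_of_le h1, fScale_of_le hle, ← mul_assoc, div_mul_div_comm,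
      mul_comm lam lam', div_self (mul_ne_zero hl'.ne' hl.ne'), one_mul]
  · push_neg at hle
    have h1 : lam' < fScale lam lam' g := by
      rw [fScale_of_gt hle]
      exact lt_add_of_pos_right _ (mul_pos
        (div_pos (tsub_pos_of_lt hl1') (tsub_pos_of_lt hl1)) (tsub_pos_of_lt hle))
    rw [fScale_of_gt h1, fScale_of_gt hle, add_tsub_cancel_left, ← mul_assoc,
      div_mul_div_comm, mul_comm (1 - lam) (1 - lam'),
      div_self (mul_ne_zero (tsub_pos_of_lt hl1').ne' (tsub_pos_of_lt hl1).ne'),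
      one_mul, add_tsub_cancel_of_le hle.le]

/-! #### `tauStep` lemmas -/

lemma regEq_not_cond {y y' : ℝ≥0} (h : RegEq K y y')
    (hc : ¬ ((IsNatVal y ∧ IsNatVal y') ∨ ((K : ℝ≥0) < y ∧ (K : ℝ≥0) < y'))) :
    ⌊y⌋₊ = ⌊y'⌋₊ ∧ fracPart y ≠ 0 ∧ fracPart y' ≠ 0 := by
  rcases h with ⟨hfl, hiff⟩ | h2
  · refine ⟨hfl, fun h0 => ?_, fun h0 => ?_⟩
    · exact hc (Or.inl ⟨isNatVal_iff_fracPart.2 h0, isNatVal_iff_fracPart.2 (hiff.1 h0)⟩)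
    · exact hc (Or.inl ⟨isNatVal_iff_fracPart.2 (hiff.2 h0), isNatVal_iff_fracPart.2 h0⟩)
  · exact absurd (Or.inr h2) hc

lemma tauStep_of_cond {y y' t : ℝ≥0}
    (hc : (IsNatVal y ∧ IsNatVal y') ∨ ((K : ℝ≥0) < y ∧ (K : ℝ≥0) < y')) :
    tauStep K y y' t = t := if_pos hc

lemma tauStep_of_not_cond {y y' t : ℝ≥0}
    (hc : ¬ ((IsNatVal y ∧ IsNatVal y') ∨ ((K : ℝ≥0) < y ∧ (K : ℝ≥0) < y'))) :
    tauStep K y y' t =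
      (⌊t⌋₊ : ℝ≥0) + fScale (1 - fracPart y) (1 - fracPart y') (fracPart t) := if_neg hc

lemma lam_pos {y : ℝ≥0} : (0 : ℝ≥0) < 1 - fracPart y := tsub_pos_of_lt (fracPart_lt_one y)

lemma lam_lt_one {y : ℝ≥0} (h : fracPart y ≠ 0) : 1 - fracPart y < 1 :=
  tsub_lt_self one_pos (pos_iff_ne_zero.2 h)

lemma regEq_add_tauStep {y y' t : ℝ≥0} (h : RegEq K y y') :
    RegEq K (y + t) (y' + tauStep K y y' t) := by
  by_cases hc : (IsNatVal y ∧ IsNatVal y') ∨ ((K : ℝ≥0) < y ∧ (K : ℝ≥0) < y')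
  · rw [tauStep_of_cond hc]
    rcases hc with ⟨⟨m, rfl⟩, ⟨m', rfl⟩⟩ | ⟨h1, h2⟩
    · rcases h with ⟨hfl, _⟩ | ⟨h1, h2⟩
      · have : m = m' := by
          rw [Nat.floor_natCast, Nat.floor_natCast] at hfl; exact hfl
        subst this; exact regEq_refl _
      · exact Or.inr ⟨lt_of_lt_of_le h1 le_self_add, lt_of_lt_of_le h2 le_self_add⟩
    · exact Or.inr ⟨lt_of_lt_of_le h1 le_self_add, lt_of_lt_of_le h2 le_self_add⟩
  · rw [tauStep_of_not_cond hc]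
    obtain ⟨hfl, hf, hf'⟩ := regEq_not_cond h hc
    have hfpos : 0 < fracPart y := pos_iff_ne_zero.2 hf
    have hfpos' : 0 < fracPart y' := pos_iff_ne_zero.2 hf'
    have hf1 : fracPart y < 1 := fracPart_lt_one y
    have hf1' : fracPart y' < 1 := fracPart_lt_one y'
    set f := fracPart y with hfdef
    set f' := fracPart y' with hfdef'
    set g := fracPart t with hgdef
    set g' := fScale (1 - f) (1 - f') g with hg'def
    have hg1 : g < 1 := fracPart_lt_one t
    have hg'1 : g' < 1 :=
      fScale_lt_one lam_pos (lam_lt_one hf) (lam_lt_one hf') hg1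
    have e1 : y + t = ((⌊y⌋₊ + ⌊t⌋₊ : ℕ) : ℝ≥0) + (f + g) := by
      conv_lhs => rw [decompX y, decompX t]
      push_cast; ring
    have e2 : y' + ((⌊t⌋₊ : ℝ≥0) + g') = ((⌊y⌋₊ + ⌊t⌋₊ : ℕ) : ℝ≥0) + (f' + g') := by
      conv_lhs => rw [decompX y']
      rw [← hfl]; push_cast; ring
    rw [e1, e2]
    rcases lt_trichotomy g (1 - f) with hgl | hgl | hgl
    · have hgl' : g' < 1 - f' := fScale_lt_lam lam_pos lam_pos hgl
      have h1 : f + g < 1 := lt_tsub_iff_left.1 hgl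
      have h2 : f' + g' < 1 := lt_tsub_iff_left.1 hgl'
      exact regEq_of_parts h1 h2
        (by constructor <;> intro hz <;> [skip; skip] <;>
          simp_all [add_eq_zero, hf, hf'])
    · have hgl' : g' = 1 - f' := by rw [hg'def, hgl]; exact fScale_eq_lam lam_pos
      have h1 : f + g = 1 := by rw [hgl, add_tsub_cancel_of_le hf1.le]
      have h2 : f' + g' = 1 := by rw [hgl', add_tsub_cancel_of_le hf1'.le]
      rw [h1, h2]
      exact regEq_refl _
    · have hgl' : 1 - f' < g' := fScale_gt_lam (lam_lt_one hf) (lam_lt_one hf') hgl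
      have h1 : 1 < f + g := by rwa [tsub_lt_iff_left hf1.le] at hgl
      have h2 : 1 < f' + g' := by rwa [tsub_lt_iff_left hf1'.le] at hgl'
      have e3 : f + g = 1 + (f + g - 1) := (add_tsub_cancel_of_le h1.le).symm
      have e4 : f' + g' = 1 + (f' + g' - 1) := (add_tsub_cancel_of_le h2.le).symm
      rw [e3, e4, ← add_assoc, ← add_assoc]
      have e5 : ((⌊y⌋₊ + ⌊t⌋₊ : ℕ) : ℝ≥0) + 1 = ((⌊y⌋₊ + ⌊t⌋₊ + 1 : ℕ) : ℝ≥0) := by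
        push_cast; ring
      rw [e5]
      refine regEq_of_parts ?_ ?_ ?_
      · rw [tsub_lt_iff_left h1.le]
        calc f + g < 1 + 1 := add_lt_add hf1 hg1
          _ = 1 + 1 := rfl
      · rw [tsub_lt_iff_left h2.le]
        exact add_lt_add hf1' hg'1
      · constructor <;> intro hz
        · exact absurd hz (tsub_pos_of_lt h1).ne'
        · exact absurd hz (tsub_pos_of_lt h2).ne'

lemma tauStep_inv {y y' : ℝ≥0} (h : RegEq K y y') (t : ℝ≥0) :
    tauStep K y' y (tauStep K y y' t) = t := by
  by_cases hc : (IsNatVal y ∧ IsNatVal y') ∨ ((K : ℝ≥0) < y ∧ (K : ℝ≥0) < y')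
  · have hc' : (IsNatVal y' ∧ IsNatVal y) ∨ ((K : ℝ≥0) < y' ∧ (K : ℝ≥0) < y) := by tauto
    rw [tauStep_of_cond hc, tauStep_of_cond hc']
  · have hc' : ¬ ((IsNatVal y' ∧ IsNatVal y) ∨ ((K : ℝ≥0) < y' ∧ (K : ℝ≥0) < y)) := by tauto
    obtain ⟨hfl, hf, hf'⟩ := regEq_not_cond h hc
    have hg'1 : fScale (1 - fracPart y) (1 - fracPart y') (fracPart t) < 1 :=
      fScale_lt_one lam_pos (lam_lt_one hf) (lam_lt_one hf') (fracPart_lt_one t)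
    rw [tauStep_of_not_cond hc, tauStep_of_not_cond hc', floor_add_eq hg'1,
      fracPart_add_eq hg'1, fScale_inv lam_pos (lam_lt_one hf) lam_pos (lam_lt_one hf'),
      floor_add_fracPart]

/-! #### `resetStep` lemmas -/

lemma resetStep_cond_iff {a b : ℝ≥0} (h : RegEq K a b) :
    (∃ m : ℕ, m ≤ K ∧ a = (m : ℝ≥0)) ↔ (∃ m : ℕ, m ≤ K ∧ b = (m : ℝ≥0)) := by
  rcases h with ⟨hfl, hiff⟩ | ⟨h1, h2⟩
  · constructor
    · rintro ⟨m, hm, rfl⟩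
      refine ⟨m, hm, ?_⟩
      obtain ⟨e1, e2⟩ := (eq_natCast_iff (m : ℝ≥0) m).1 rfl
      exact (eq_natCast_iff b m).2 ⟨by rw [← hfl, e1], hiff.1 e2⟩
    · rintro ⟨m, hm, rfl⟩
      refine ⟨m, hm, ?_⟩
      obtain ⟨e1, e2⟩ := (eq_natCast_iff (m : ℝ≥0) m).1 rfl
      exact (eq_natCast_iff a m).2 ⟨by rw [hfl, e1], hiff.2 e2⟩
  · constructor
    · rintro ⟨m, hm, rfl⟩
      exact absurd h1 (not_lt.2 (by exact_mod_cast hm))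
    · rintro ⟨m, hm, rfl⟩
      exact absurd h2 (not_lt.2 (by exact_mod_cast hm))

lemma regEq_resetStep {a b : ℝ≥0} (h : RegEq K a b) :
    RegEq K (resetStep K a) (resetStep K b) := by
  unfold resetStep
  by_cases hra : ∃ m : ℕ, m ≤ K ∧ a = (m : ℝ≥0)
  · rw [if_pos hra, if_pos ((resetStep_cond_iff h).1 hra)]
    exact regEq_refl 0
  · rw [if_neg hra, if_neg (fun hb => hra ((resetStep_cond_iff h).2 hb))]
    exact h

lemma resetStep_resetStep (v : ℝ≥0) : resetStep K (resetStep K v) = resetStep K v := by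
  unfold resetStep
  by_cases h : ∃ m : ℕ, m ≤ K ∧ v = (m : ℝ≥0)
  · rw [if_pos h, if_pos ⟨0, Nat.zero_le K, by norm_num⟩]
  · rw [if_neg h, if_neg h]

lemma resetStep_zero : resetStep K (0 : ℝ≥0) = 0 :=
  if_pos ⟨0, Nat.zero_le K, by norm_num⟩

lemma cKAux_nil (v : ℝ≥0) : cKAux K v [] = v := rfl

lemma cKAux_cons (v t : ℝ≥0) (d : Timestamp) :
    cKAux K v (t :: d) = cKAux K (resetStep K (v + t)) d := rfl

lemma resetStep_cKAux : ∀ (d : Timestamp) (v : ℝ≥0),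
    resetStep K (cKAux K (resetStep K v) d) = cKAux K (resetStep K v) d := by
  intro d
  induction d with
  | nil => intro v; exact resetStep_resetStep v
  | cons t d ih =>
      intro v
      rw [cKAux_cons]
      exact ih (resetStep K v + t)

lemma resetStep_cKW {A : Type} (w : TimedWord A) :
    resetStep K (cKW K w) = cKW K w := by
  unfold cKW cK
  have h0 : (0 : ℝ≥0) = resetStep K 0 := resetStep_zero.symm
  rw [h0]
  exact resetStep_cKAux _ 0

/-! #### Guard transfer -/

lemma strictGuard_sat_iff {φ : CC} (hs : StrictGuard K φ) (hm : φ.maxConst ≤ K)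
    {a b : ℝ≥0} (h : RegEq K a b) : φ.sat a ↔ φ.sat b := by
  rcases hs with ⟨m, rfl⟩ | ⟨m, rfl⟩ | rfl
  · -- equality guard
    have hmK : m ≤ K := hm
    show a = (m : ℝ≥0) ↔ b = (m : ℝ≥0)
    rcases h with ⟨hfl, hiff⟩ | ⟨h1, h2⟩
    · rw [eq_natCast_iff a m, eq_natCast_iff b m, hfl]
      exact and_congr_right fun _ => hiff
    · constructor <;> rintro rfl
      · exact absurd h1 (not_lt.2 (by exact_mod_cast hmK))
      · exact absurd h2 (not_lt.2 (by exact_mod_cast hmK))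
  · -- interval guard
    have hmK : m + 1 ≤ K := le_trans (le_max_right _ _) hm
    show ((m : ℝ≥0) < a ∧ a < ((m + 1 : ℕ) : ℝ≥0)) ↔
      ((m : ℝ≥0) < b ∧ b < ((m + 1 : ℕ) : ℝ≥0))
    rcases h with ⟨hfl, hiff⟩ | ⟨h1, h2⟩
    · rw [natCast_lt_iff a m, natCast_lt_iff b m, lt_natCast_iff a (m + 1),
        lt_natCast_iff b (m + 1), hfl]
      constructor <;> rintro ⟨hA, hB⟩ <;> refine ⟨?_, hB⟩
      · rcases hA with h' | ⟨he, hz⟩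
        · exact Or.inl h'
        · exact Or.inr ⟨he, fun hzz => hz (hiff.2 hzz)⟩
      · rcases hA with h' | ⟨he, hz⟩
        · exact Or.inl h'
        · exact Or.inr ⟨he, fun hzz => hz (hiff.1 hzz)⟩
    · have hKa : ((m + 1 : ℕ) : ℝ≥0) ≤ a :=
        le_trans (by exact_mod_cast hmK) h1.le
      have hKb : ((m + 1 : ℕ) : ℝ≥0) ≤ b :=
        le_trans (by exact_mod_cast hmK) h2.le
      constructor <;> rintro ⟨hA, hB⟩
      · exact absurd hB (not_lt.2 hKa)
      · exact absurd hB (not_lt.2 hKb)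
  · -- x > K guard
    show (K : ℝ≥0) < a ↔ (K : ℝ≥0) < b
    rcases h with ⟨hfl, hiff⟩ | ⟨h1, h2⟩
    · rw [natCast_lt_iff a K, natCast_lt_iff b K, hfl]
      constructor <;> rintro (h' | ⟨he, hz⟩)
      · exact Or.inl h'
      · exact Or.inr ⟨he, fun hzz => hz (hiff.2 hzz)⟩
      · exact Or.inl h'
      · exact Or.inr ⟨he, fun hzz => hz (hiff.1 hzz)⟩
    · exact iff_of_true h1 h2

/-! #### `tauWAux` lemmas -/

lemma tauWAux_nil {A : Type} (y y' : ℝ≥0) : tauWAux (A := A) K y y' [] = [] := rfl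

lemma tauWAux_cons {A : Type} (y y' t : ℝ≥0) (a : A) (w : TimedWord A) :
    tauWAux K y y' ((t, a) :: w) =
      (tauStep K y y' t, a) ::
        tauWAux K (resetStep K (y + t)) (resetStep K (y' + tauStep K y y' t)) w := rfl

lemma tauWAux_inv {A : Type} : ∀ (w : TimedWord A) (y y' : ℝ≥0), RegEq K y y' →
    tauWAux K y' y (tauWAux K y y' w) = w := by
  intro w
  induction w with
  | nil => intro y y' _; rfl
  | cons x w ih =>
      obtain ⟨t, a⟩ := x
      intro y y' h
      rw [tauWAux_cons, tauWAux_cons, tauStep_inv h t]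
      exact congrArg (List.cons (t, a))
        (ih _ _ (regEq_resetStep (regEq_add_tauStep h)))

/-! #### Runs of strict automata -/

lemma resetStep_of_sat {A : Type} {M : TA A} (hs : M.IsStrict K) (hm : M.MaxConstLE K)
    {θ : TTrans M.Q A} (hθ : θ ∈ M.trans) {x : ℝ≥0} (hg : θ.guard.sat x) :
    resetStep K x = if θ.reset then 0 else x := by
  obtain ⟨hsg, hiff⟩ := hs θ hθ
  have hmc := hm θ hθ
  rcases hsg with ⟨m, hguard⟩ | ⟨m, hguard⟩ | hguard
  · have hr : θ.reset = true := hiff.1 ⟨m, hguard⟩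
    rw [hguard] at hg hmc
    have hx : x = (m : ℝ≥0) := hg
    have hmK : m ≤ K := hmc
    rw [hr, if_pos rfl]
    exact if_pos ⟨m, hmK, hx⟩
  · have hr : θ.reset = false := by
      by_cases hb : θ.reset = true
      · obtain ⟨n, hn⟩ := hiff.2 hb
        rw [hguard] at hn
        exact absurd hn (by simp)
      · simpa using hb
    rw [hguard] at hg hmc
    simp only [CC.sat] at hg
    obtain ⟨hg1, hg2⟩ := hg
    rw [hr, if_neg (by simp)]
    refine if_neg ?_
    rintro ⟨m', _, rfl⟩
    have h1 : m < m' := by exact_mod_cast hg1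
    have h2 : m' < m + 1 := by exact_mod_cast hg2
    omega
  · have hr : θ.reset = false := by
      by_cases hb : θ.reset = true
      · obtain ⟨n, hn⟩ := hiff.2 hb
        rw [hguard] at hn
        exact absurd hn (by simp)
      · simpa using hb
    rw [hguard] at hg
    simp only [CC.sat] at hg
    have hg1 : (K : ℝ≥0) < x := hg
    rw [hr, if_neg (by simp)]
    refine if_neg ?_
    rintro ⟨m', hm', rfl⟩
    exact absurd hg1 (not_lt.2 (by exact_mod_cast hm'))

lemma steps_append' {A : Type} {M : TA A} {c1 c2 c3 : M.Q × ℝ≥0}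
    {w1 w2 : TimedWord A} (h1 : Steps M c1 w1 c2) (h2 : Steps M c2 w2 c3) :
    Steps M c1 (w1 ++ w2) c3 := by
  induction h1 with
  | nil c => exact h2
  | cons θ hθ hsrc hlab hg hrest ih => exact Steps.cons θ hθ hsrc hlab hg (ih h2)

lemma steps_split {A : Type} {M : TA A} : ∀ {w1 w2 : TimedWord A} {c1 c3 : M.Q × ℝ≥0},
    Steps M c1 (w1 ++ w2) c3 → ∃ c2, Steps M c1 w1 c2 ∧ Steps M c2 w2 c3 := by
  intro w1
  induction w1 with
  | nil => intro w2 c1 c3 h; exact ⟨c1, Steps.nil c1, h⟩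
  | cons x w1 ih =>
      obtain ⟨t, a⟩ := x
      intro w2 c1 c3 h
      obtain ⟨q, ν⟩ := c1
      cases h with
      | cons θ hθ hsrc hlab hg hrest =>
          obtain ⟨c2, hA, hB⟩ := ih hrest
          exact ⟨c2, Steps.cons θ hθ hsrc hlab hg hA, hB⟩

lemma steps_det {A : Type} {M : TA A} (hdet : M.Deterministic) :
    ∀ {w : TimedWord A} {c d1 d2 : M.Q × ℝ≥0},
      Steps M c w d1 → Steps M c w d2 → d1 = d2 := by
  intro w
  induction w with
  | nil =>
      intro c d1 d2 h1 h2
      cases h1; cases h2; rfl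
  | cons x w ih =>
      obtain ⟨t, a⟩ := x
      intro c d1 d2 h1 h2
      obtain ⟨q, ν⟩ := c
      cases h1 with
      | cons θ1 hθ1 hs1 hl1 hg1 hr1 =>
        cases h2 with
        | cons θ2 hθ2 hs2 hl2 hg2 hr2 =>
          have hθeq : θ1 = θ2 := by
            by_contra hne
            exact hdet θ1 hθ1 θ2 hθ2 hne (hs1.trans hs2.symm) (hl1.trans hl2.symm)
              (ν + t) ⟨hg1, hg2⟩
          subst hθeq
          exact ih hr1 hr2

lemma steps_clock {A : Type} {M : TA A} (hs : M.IsStrict K) (hm : M.MaxConstLE K) :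
    ∀ {w : TimedWord A} {c c' : M.Q × ℝ≥0}, Steps M c w c' →
      c'.2 = cKAux K c.2 (w.map Prod.fst) := by
  intro w c c' h
  induction h with
  | nil c => rfl
  | cons θ hθ hsrc hlab hg hrest ih =>
      rw [List.map_cons, cKAux_cons, resetStep_of_sat hs hm hθ hg]
      exact ih

/-! #### The simulation lemma -/

lemma sim_lemma {A : Type} {M : TA A} (_hdet : M.Deterministic)
    (hs : M.IsStrict K) (hm : M.MaxConstLE K) :
    ∀ (w : TimedWord A) (q : M.Q) (y y' : ℝ≥0), RegEq K y y' →
      (∃ p ν, Steps M (q, y) w (p, ν) ∧ p ∈ M.final) →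
      ∃ p ν, Steps M (q, y') (tauWAux K y y' w) (p, ν) ∧ p ∈ M.final := by
  intro w
  induction w with
  | nil =>
      rintro q y y' hreg ⟨p, ν, hst, hfin⟩
      cases hst
      exact ⟨q, y', Steps.nil _, hfin⟩
  | cons x w ih =>
      obtain ⟨t, a⟩ := x
      rintro q y y' hreg ⟨p, ν, hst, hfin⟩
      cases hst with
      | cons θ hθ hsrc hlab hg hrest =>
          have hreg2 : RegEq K (y + t) (y' + tauStep K y y' t) := regEq_add_tauStep hreg
          have hg' : θ.guard.sat (y' + tauStep K y y' t) :=
            (strictGuard_sat_iff (hs θ hθ).1 (hm θ hθ) hreg2).1 hg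
          have h1 : resetStep K (y + t) = if θ.reset then 0 else y + t :=
            resetStep_of_sat hs hm hθ hg
          have h2 : resetStep K (y' + tauStep K y y' t) =
              if θ.reset then 0 else y' + tauStep K y y' t :=
            resetStep_of_sat hs hm hθ hg'
          have hreg3 : RegEq K (resetStep K (y + t))
              (resetStep K (y' + tauStep K y y' t)) := regEq_resetStep hreg2
          have hrest' : Steps M (θ.dst, resetStep K (y + t)) w (p, ν) := by
            rw [h1]; exact hrest
          obtain ⟨p2, ν2, hst2, hfin2⟩ :=
            ih θ.dst (resetStep K (y + t)) (resetStep K (y' + tauStep K y y' t))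
              hreg3 ⟨p, ν, hrest', hfin⟩
          refine ⟨p2, ν2, ?_, hfin2⟩
          rw [tauWAux_cons]
          exact Steps.cons θ hθ hsrc hlab hg' (by rw [← h2]; exact hst2)

end Aux

/-- the state equivalence of a `K`-acceptor refines `≈^{L,K}`. -/
theorem statement11 {A : Type} [Finite A] (K : ℕ) (B : TA A) (hB : IsKAcceptor B K) :
    ∀ u v : TimedWord A, B.SameState u v → ApproxLK B.Lang K u v := by
  obtain ⟨-, -, hdet, -, hstrict, hmax, hregK⟩ := hB
  intro u v hsame
  obtain ⟨q, ν, ν', hu, hv⟩ := hsame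
  have hνu : ν = cKW K u := steps_clock hstrict hmax hu
  have hνv : ν' = cKW K v := steps_clock hstrict hmax hv
  have hRE : RegEq K (cKW K u) (cKW K v) := hregK u v ⟨q, ν, ν', hu, hv⟩
  refine ⟨hRE, ?_⟩
  have hxu : resetStep K (cKW K u) = cKW K u := resetStep_cKW u
  have hxv : resetStep K (cKW K v) = cKW K v := resetStep_cKW v
  have htw : ∀ w : TimedWord A,
      tauW K (cKW K u) (cKW K v) w = tauWAux K (cKW K u) (cKW K v) w := by
    intro w; unfold tauW; rw [hxu, hxv]
  have htw' : ∀ w : TimedWord A,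
      tauW K (cKW K v) (cKW K u) w = tauWAux K (cKW K v) (cKW K u) w := by
    intro w; unfold tauW; rw [hxu, hxv]
  ext z
  simp only [Set.mem_image, residual, Set.mem_setOf_eq]
  constructor
  · rintro ⟨w, hw, rfl⟩
    obtain ⟨p, νf, hsteps, hpfin⟩ := hw
    obtain ⟨c2, hA, hB2⟩ := steps_split hsteps
    have hc2 : c2 = (q, ν) := steps_det hdet hA hu
    rw [hc2, hνu] at hB2
    obtain ⟨p2, ν2, h2, hf2⟩ :=
      sim_lemma hdet hstrict hmax w q (cKW K u) (cKW K v) hRE ⟨p, νf, hB2, hpfin⟩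
    rw [htw]
    refine ⟨p2, ν2, ?_, hf2⟩
    rw [hνv] at hv
    exact steps_append' hv h2
  · intro hz
    obtain ⟨p, νf, hsteps, hpfin⟩ := hz
    obtain ⟨c2, hA, hB2⟩ := steps_split hsteps
    have hc2 : c2 = (q, ν') := steps_det hdet hA hv
    rw [hc2, hνv] at hB2
    obtain ⟨p2, ν2, h2, hf2⟩ :=
      sim_lemma hdet hstrict hmax z q (cKW K v) (cKW K u) (regEq_symm hRE)
        ⟨p, νf, hB2, hpfin⟩
    refine ⟨tauWAux K (cKW K v) (cKW K u) z, ?_, ?_⟩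
    · refine ⟨p2, ν2, ?_, hf2⟩
      rw [hνu] at hu
      exact steps_append' hu h2
    · rw [htw]
      exact tauWAux_inv z (cKW K v) (cKW K u) (regEq_symm hRE)

end IRTA
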